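/- Weighted convolution-type bound for a triple-window kernel: let φ, g, ψ ∈ 𝒮(ℝ^d), r ∈ ℝ, and N ∈ ℕ with 2N > d. Then there is C > 0 such that for all nonnegative measurable F : ℝ^{2d} → [0,∞) and G : ℝ^{2d} → [0,∞), ∬ ⟨X⟩^r ∫_{ℝ^{5d}} ⟨ξ+η−Ξ⟩^{−2N} |φ(y−X)| |g(y−x)| |ψ(y−z)| G(z,η) F(x,ξ) dx dy dz dξ dη dX dΞ ≤ C (∫ sup_z G(z,η) dη) (∬ ⟨x⟩^r F(x,ξ) dx dξ). -/

import Mathlib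

open MeasureTheory
open scoped ENNReal NNReal
noncomputable section

/-- The Japanese bracket `⟨x⟩ = (1 + |x|²)^{1/2}`. -/
def jap {d : ℕ} (x : EuclideanSpace ℝ (Fin d)) : ℝ := Real.sqrt (1 + ‖x‖ ^ 2)



variable {d : ℕ}

lemma jap_nonneg (x : EuclideanSpace ℝ (Fin d)) : 0 ≤ jap x := Real.sqrt_nonneg _

lemma jap_sq (x : EuclideanSpace ℝ (Fin d)) : jap x ^ 2 = 1 + ‖x‖ ^ 2 :=
  Real.sq_sqrt (by positivity)

lemma one_le_jap (x : EuclideanSpace ℝ (Fin d)) : 1 ≤ jap x := by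
  nlinarith [jap_sq x, jap_nonneg x, sq_nonneg ‖x‖]

lemma jap_pos (x : EuclideanSpace ℝ (Fin d)) : 0 < jap x :=
  lt_of_lt_of_le one_pos (one_le_jap x)

lemma jap_neg_eq (x : EuclideanSpace ℝ (Fin d)) : jap (-x) = jap x := by
  simp [jap]

lemma jap_sub_comm (x y : EuclideanSpace ℝ (Fin d)) : jap (x - y) = jap (y - x) := by
  rw [← jap_neg_eq (x - y), neg_sub]

lemma jap_add_le (a b : EuclideanSpace ℝ (Fin d)) :
    jap (a + b) ≤ Real.sqrt 2 * jap a * jap b := by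
  rw [jap, jap, jap, ← Real.sqrt_mul (by norm_num), ← Real.sqrt_mul (by positivity)]
  apply Real.sqrt_le_sqrt
  have h := norm_add_le a b
  nlinarith [norm_nonneg a, norm_nonneg b, norm_nonneg (a + b), sq_nonneg (‖a‖ - ‖b‖),
    sq_nonneg (‖a‖ * ‖b‖)]

lemma jap_rpow_peetre (r : ℝ) (a b : EuclideanSpace ℝ (Fin d)) :
    jap (a + b) ^ r ≤ Real.sqrt 2 ^ |r| * jap a ^ |r| * jap b ^ r := by
  rcases le_or_gt 0 r with hr | hr
  · rw [abs_of_nonneg hr]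
    calc jap (a + b) ^ r ≤ (Real.sqrt 2 * jap a * jap b) ^ r :=
          Real.rpow_le_rpow (jap_nonneg _) (jap_add_le a b) hr
      _ = Real.sqrt 2 ^ r * jap a ^ r * jap b ^ r := by
          rw [Real.mul_rpow (mul_nonneg (Real.sqrt_nonneg 2) (jap_nonneg _)) (jap_nonneg _),
            Real.mul_rpow (Real.sqrt_nonneg 2) (jap_nonneg _)]
  · rw [abs_of_neg hr]
    have hc : (0:ℝ) < Real.sqrt 2 * jap a := by
      have := jap_pos a
      have h2 : (0:ℝ) < Real.sqrt 2 := by positivity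
      positivity
    have key : jap b ≤ jap (a + b) * (Real.sqrt 2 * jap a) := by
      have h := jap_add_le (a + b) (-a)
      have he : a + b + -a = b := by abel
      rw [he, jap_neg_eq] at h
      nlinarith [jap_nonneg (a + b), jap_nonneg a, jap_nonneg b]
    have hx : (0:ℝ) < jap b / (Real.sqrt 2 * jap a) := div_pos (jap_pos b) hc
    have hle : jap b / (Real.sqrt 2 * jap a) ≤ jap (a + b) :=
      (div_le_iff₀ hc).mpr key
    calc jap (a + b) ^ r ≤ (jap b / (Real.sqrt 2 * jap a)) ^ r :=
          Real.rpow_le_rpow_of_nonpos hx hle hr.le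
      _ = Real.sqrt 2 ^ (-r) * jap a ^ (-r) * jap b ^ r := by
          rw [div_eq_mul_inv, Real.mul_rpow (jap_nonneg b) (by positivity),
            Real.inv_rpow hc.le, ← Real.rpow_neg hc.le,
            Real.mul_rpow (Real.sqrt_nonneg 2) (jap_nonneg a)]
          ring

lemma jap_weight (r : ℝ) (X y x : EuclideanSpace ℝ (Fin d)) :
    jap X ^ r ≤ (2:ℝ) ^ |r| * (jap (y - X) ^ |r| * (jap (y - x) ^ |r| * jap x ^ r)) := by
  have h1 : jap X ^ r ≤ Real.sqrt 2 ^ |r| * jap (X - y) ^ |r| * jap y ^ r := by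
    have := jap_rpow_peetre r (X - y) y
    rwa [sub_add_cancel] at this
  have h2 : jap y ^ r ≤ Real.sqrt 2 ^ |r| * jap (y - x) ^ |r| * jap x ^ r := by
    have := jap_rpow_peetre r (y - x) x
    rwa [sub_add_cancel] at this
  have hs : Real.sqrt 2 ^ |r| * Real.sqrt 2 ^ |r| = (2:ℝ) ^ |r| := by
    rw [← Real.mul_rpow (Real.sqrt_nonneg 2) (Real.sqrt_nonneg 2),
      Real.mul_self_sqrt (by norm_num)]
  have hXy : jap (X - y) = jap (y - X) := jap_sub_comm X y
  calc jap X ^ r ≤ Real.sqrt 2 ^ |r| * jap (X - y) ^ |r| * jap y ^ r := h1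
    _ ≤ Real.sqrt 2 ^ |r| * jap (X - y) ^ |r| *
        (Real.sqrt 2 ^ |r| * jap (y - x) ^ |r| * jap x ^ r) := by
        exact mul_le_mul_of_nonneg_left h2 (mul_nonneg
          (Real.rpow_nonneg (Real.sqrt_nonneg 2) _) (Real.rpow_nonneg (jap_nonneg _) _))
    _ = (2:ℝ) ^ |r| * (jap (y - X) ^ |r| * (jap (y - x) ^ |r| * jap x ^ r)) := by
        rw [hXy] at *
        rw [← hs]; ring



lemma lint_of_integrable {h : EuclideanSpace ℝ (Fin d) → ℝ} (hh : Integrable h) :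
    ∫⁻ u, ENNReal.ofReal (h u) ≠ ⊤ := by
  refine ne_top_of_le_ne_top ?_ (lintegral_mono fun u => Real.ofReal_le_enorm (h u))
  exact hh.2.ne

lemma lint_K_ne_top (N : ℕ) (hN : d < 2 * N) :
    ∫⁻ u : EuclideanSpace ℝ (Fin d), ENNReal.ofReal (jap u ^ (-(2 * N : ℝ))) ≠ ⊤ := by
  have hint : Integrable (fun u : EuclideanSpace ℝ (Fin d) =>
      (1 + ‖u‖ ^ 2) ^ (-(2 * N : ℝ) / 2)) := by
    apply integrable_rpow_neg_one_add_norm_sq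
    rw [finrank_euclideanSpace_fin]
    exact_mod_cast hN
  have he : ∀ u : EuclideanSpace ℝ (Fin d),
      jap u ^ (-(2 * N : ℝ)) = (1 + ‖u‖ ^ 2) ^ (-(2 * N : ℝ) / 2) := by
    intro u
    rw [jap, Real.sqrt_eq_rpow, ← Real.rpow_mul (by positivity)]
    congr 1; ring
  simp_rw [he]
  exact lint_of_integrable hint

lemma max_pow_le (t : ℝ) (ht : 0 ≤ t) (k : ℕ) : (1 + t) ^ k ≤ 2 ^ k * (1 + t ^ k) := by
  have h1 : (1 + t) ^ k ≤ (2 * max 1 t) ^ k := by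
    apply pow_le_pow_left₀ (by positivity)
    rcases le_total t 1 with h | h
    · simp [max_eq_left h]; linarith
    · simp [max_eq_right h]; linarith
  have h2 : (2 * max 1 t) ^ k = 2 ^ k * (max 1 t) ^ k := by rw [mul_pow]
  have h3 : (max 1 t) ^ k ≤ 1 + t ^ k := by
    rcases le_total t 1 with h | h
    · simp only [max_eq_left h, one_pow]
      have : 0 ≤ t ^ k := by positivity
      linarith
    · simp only [max_eq_right h]
      have : 0 ≤ (1:ℝ) := zero_le_one
      nlinarith [pow_nonneg ht k]
  calc (1 + t) ^ k ≤ 2 ^ k * (max 1 t) ^ k := by rw [← h2]; exact h1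
    _ ≤ 2 ^ k * (1 + t ^ k) := by
        apply mul_le_mul_of_nonneg_left h3 (by positivity)

lemma lint_schwartz (f : SchwartzMap (EuclideanSpace ℝ (Fin d)) ℂ) (s : ℝ) (hs : 0 ≤ s) :
    ∫⁻ u, ENNReal.ofReal (jap u ^ s) * (‖f u‖₊ : ℝ≥0∞) ≠ ⊤ := by
  set k := ⌈s⌉₊ with hk
  have hpt : ∀ u : EuclideanSpace ℝ (Fin d),
      jap u ^ s * ‖f u‖ ≤ 2 ^ k * ‖f u‖ + 2 ^ k * (‖u‖ ^ k * ‖f u‖) := by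
    intro u
    have h0 : jap u ^ s ≤ (1 + ‖u‖) ^ s :=
      Real.rpow_le_rpow (jap_nonneg u) (sqrt_one_add_norm_sq_le u) hs
    have h1 : (1 + ‖u‖) ^ s ≤ (1 + ‖u‖) ^ (k : ℝ) :=
      Real.rpow_le_rpow_of_exponent_le (by simp [norm_nonneg]) (Nat.le_ceil s)
    have h2 : (1 + ‖u‖) ^ (k : ℝ) = (1 + ‖u‖) ^ k := Real.rpow_natCast _ k
    have h3 : (1 + ‖u‖) ^ k ≤ 2 ^ k * (1 + ‖u‖ ^ k) := max_pow_le ‖u‖ (norm_nonneg u) k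
    have hj : jap u ^ s ≤ 2 ^ k * (1 + ‖u‖ ^ k) := by
      calc jap u ^ s ≤ (1 + ‖u‖) ^ s := h0
        _ ≤ (1 + ‖u‖) ^ (k:ℝ) := h1
        _ = (1 + ‖u‖) ^ k := h2
        _ ≤ 2 ^ k * (1 + ‖u‖ ^ k) := h3
    have hfn : (0:ℝ) ≤ ‖f u‖ := norm_nonneg _
    nlinarith [Real.rpow_nonneg (jap_nonneg u) s]
  have hmaj : Integrable (fun u : EuclideanSpace ℝ (Fin d) =>
      2 ^ k * ‖f u‖ + 2 ^ k * (‖u‖ ^ k * ‖f u‖)) := by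
    exact ((f.integrable (μ := volume)).norm.const_mul _).add
      ((f.integrable_pow_mul volume k).const_mul _)
  have he : ∫⁻ u, ENNReal.ofReal (jap u ^ s) * (‖f u‖₊ : ℝ≥0∞)
      = ∫⁻ u, ENNReal.ofReal (jap u ^ s * ‖f u‖) := by
    congr 1; funext u
    rw [ENNReal.ofReal_mul (Real.rpow_nonneg (jap_nonneg u) s), ofReal_norm, enorm_eq_nnnorm]
  rw [he]
  exact ne_top_of_le_ne_top (lint_of_integrable hmaj)
    (lintegral_mono fun u => ENNReal.ofReal_le_ofReal (hpt u))


lemma jap_pos' (x : EuclideanSpace ℝ (Fin d)) : 0 < jap x := Real.sqrt_pos.mpr (by positivity)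

lemma continuous_jap : Continuous fun x : EuclideanSpace ℝ (Fin d) => jap x :=
  Real.continuous_sqrt.comp (continuous_const.add (continuous_norm.pow 2))

lemma measurable_jap_rpow (s : ℝ) :
    Measurable fun u : EuclideanSpace ℝ (Fin d) => ENNReal.ofReal (jap u ^ s) := by
  apply Measurable.ennreal_ofReal
  apply Continuous.measurable
  rw [continuous_iff_continuousAt]
  intro u
  exact (Real.continuousAt_rpow_const (jap u) s (Or.inl (jap_pos' u).ne')).comp
    continuous_jap.continuousAt

abbrev Ed (d : ℕ) := EuclideanSpace ℝ (Fin d)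

variable {d : ℕ}

lemma lint_sub_left (h : Ed d → ℝ≥0∞) (hh : Measurable h) (a : Ed d) :
    ∫⁻ u, h (a - u) = ∫⁻ u, h u := by
  have h1 : ∫⁻ u, h (a - (u + a)) = ∫⁻ u, h (a - u) :=
    lintegral_add_right_eq_self (fun u => h (a - u)) a
  have h2 : ∀ u : Ed d, a - (u + a) = -u := fun u => by abel
  simp_rw [h2] at h1
  rw [← h1]
  exact (Measure.measurePreserving_neg (volume : Measure (Ed d))).lintegral_comp hh

lemma swap2 {f : Ed d → Ed d → ℝ≥0∞} (hf : Measurable fun q : Ed d × Ed d => f q.1 q.2) :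
    ∫⁻ a, ∫⁻ b, f a b = ∫⁻ b, ∫⁻ a, f a b :=
  lintegral_lintegral_swap hf.aemeasurable

lemma push_const {α : Type*} [MeasurableSpace α] {μ : Measure α} (c : ℝ≥0∞) (hc : c ≠ ⊤)
    (f : α → ℝ≥0∞) : c * ∫⁻ a, f a ∂μ = ∫⁻ a, c * f a ∂μ :=
  (lintegral_const_mul' c f hc).symm

lemma swap5 {f : Ed d → Ed d → Ed d → Ed d → Ed d → Ed d → ℝ≥0∞}
    (hf : Measurable fun q : ((((Ed d × Ed d) × Ed d) × Ed d) × Ed d) × Ed d =>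
      f q.1.1.1.1.1 q.1.1.1.1.2 q.1.1.1.2 q.1.1.2 q.1.2 q.2) :
    ∫⁻ Ξ, ∫⁻ x, ∫⁻ y, ∫⁻ z, ∫⁻ ξ, ∫⁻ η, f Ξ x y z ξ η
      = ∫⁻ x, ∫⁻ y, ∫⁻ z, ∫⁻ ξ, ∫⁻ Ξ, ∫⁻ η, f Ξ x y z ξ η := by
  have m5 : Measurable fun q : (((Ed d × Ed d) × Ed d) × Ed d) × Ed d =>
      ∫⁻ η, f q.1.1.1.1 q.1.1.1.2 q.1.1.2 q.1.2 q.2 η := hf.lintegral_prod_right'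
  have m4 : Measurable fun q : ((Ed d × Ed d) × Ed d) × Ed d =>
      ∫⁻ ξ, ∫⁻ η, f q.1.1.1 q.1.1.2 q.1.2 q.2 ξ η := m5.lintegral_prod_right'
  have m3 : Measurable fun q : (Ed d × Ed d) × Ed d =>
      ∫⁻ z, ∫⁻ ξ, ∫⁻ η, f q.1.1 q.1.2 q.2 z ξ η := m4.lintegral_prod_right'
  have m2 : Measurable fun q : Ed d × Ed d =>
      ∫⁻ y, ∫⁻ z, ∫⁻ ξ, ∫⁻ η, f q.1 q.2 y z ξ η := m3.lintegral_prod_right'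
  calc ∫⁻ Ξ, ∫⁻ x, ∫⁻ y, ∫⁻ z, ∫⁻ ξ, ∫⁻ η, f Ξ x y z ξ η
      = ∫⁻ x, ∫⁻ Ξ, ∫⁻ y, ∫⁻ z, ∫⁻ ξ, ∫⁻ η, f Ξ x y z ξ η := swap2 m2
    _ = ∫⁻ x, ∫⁻ y, ∫⁻ z, ∫⁻ ξ, ∫⁻ Ξ, ∫⁻ η, f Ξ x y z ξ η := by
        refine lintegral_congr fun x => ?_
        calc ∫⁻ Ξ, ∫⁻ y, ∫⁻ z, ∫⁻ ξ, ∫⁻ η, f Ξ x y z ξ η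
            = ∫⁻ y, ∫⁻ Ξ, ∫⁻ z, ∫⁻ ξ, ∫⁻ η, f Ξ x y z ξ η :=
              swap2 (m3.comp ((measurable_fst.prodMk measurable_const).prodMk
                measurable_snd))
          _ = ∫⁻ y, ∫⁻ z, ∫⁻ ξ, ∫⁻ Ξ, ∫⁻ η, f Ξ x y z ξ η := by
              refine lintegral_congr fun y => ?_
              calc ∫⁻ Ξ, ∫⁻ z, ∫⁻ ξ, ∫⁻ η, f Ξ x y z ξ η
                  = ∫⁻ z, ∫⁻ Ξ, ∫⁻ ξ, ∫⁻ η, f Ξ x y z ξ η :=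
                    swap2 (m4.comp (((measurable_fst.prodMk measurable_const).prodMk
                      measurable_const).prodMk measurable_snd))
                _ = ∫⁻ z, ∫⁻ ξ, ∫⁻ Ξ, ∫⁻ η, f Ξ x y z ξ η := by
                    refine lintegral_congr fun z => ?_
                    exact swap2 (m5.comp ((((measurable_fst.prodMk
                      measurable_const).prodMk measurable_const).prodMk
                      measurable_const).prodMk measurable_snd))

lemma L_eta (K : Ed d → ℝ≥0∞) (hK : Measurable K) (G : Ed d × Ed d → ℝ≥0∞)
    (hG : Measurable G) (z ξ : Ed d) (c : ℝ≥0∞) :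
    ∫⁻ Ξ, ∫⁻ η, (K (ξ + η - Ξ) * G (z, η)) * c
      = ((∫⁻ u, K u) * ∫⁻ η, G (z, η)) * c := by
  have hGz : Measurable fun η : Ed d => G (z, η) :=
    hG.comp (measurable_const.prodMk measurable_id)
  have hKG : Measurable fun q : Ed d × Ed d => K (ξ + q.2 - q.1) * G (z, q.2) :=
    (hK.comp ((measurable_const.add measurable_snd).sub measurable_fst)).mul
      (hG.comp (measurable_const.prodMk measurable_snd))
  calc ∫⁻ Ξ, ∫⁻ η, (K (ξ + η - Ξ) * G (z, η)) * c
      = ∫⁻ Ξ, (∫⁻ η, K (ξ + η - Ξ) * G (z, η)) * c := by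
        refine lintegral_congr fun Ξ => ?_
        exact lintegral_mul_const c
          ((hK.comp ((measurable_const.add measurable_id).sub measurable_const)).mul hGz)
    _ = (∫⁻ Ξ, ∫⁻ η, K (ξ + η - Ξ) * G (z, η)) * c :=
        lintegral_mul_const c hKG.lintegral_prod_right'
    _ = ((∫⁻ u, K u) * ∫⁻ η, G (z, η)) * c := by
        congr 1
        calc ∫⁻ Ξ, ∫⁻ η, K (ξ + η - Ξ) * G (z, η)
            = ∫⁻ η, ∫⁻ Ξ, K (ξ + η - Ξ) * G (z, η) := swap2 hKG
          _ = ∫⁻ η, (∫⁻ u, K u) * G (z, η) := by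
              refine lintegral_congr fun η => ?_
              have hm : Measurable fun Ξ : Ed d => K (ξ + η - Ξ) :=
                hK.comp (measurable_const.sub measurable_id)
              rw [lintegral_mul_const _ hm, lint_sub_left K hK (ξ + η)]
          _ = (∫⁻ u, K u) * ∫⁻ η, G (z, η) := lintegral_const_mul _ hGz

lemma core (P Q R K : Ed d → ℝ≥0∞) (hP : Measurable P) (hQ : Measurable Q)
    (hR : Measurable R) (hK : Measurable K)
    (Ft G : Ed d × Ed d → ℝ≥0∞) (hFt : Measurable Ft) (hG : Measurable G) :
    ∫⁻ X, ∫⁻ Ξ, ∫⁻ x, ∫⁻ y, ∫⁻ z, ∫⁻ ξ, ∫⁻ η,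
        (K (ξ + η - Ξ) * G (z, η)) * (P (y - X) * (Q (y - x) * (R (y - z) * Ft (x, ξ))))
      ≤ ((∫⁻ u, P u) * (∫⁻ u, Q u) * (∫⁻ u, R u) * (∫⁻ u, K u)) *
        ((∫⁻ η, ⨆ z, G (z, η)) * (∫⁻ x, ∫⁻ ξ, Ft (x, ξ))) := by
  set IP := ∫⁻ u, P u
  set IQ := ∫⁻ u, Q u
  set IR := ∫⁻ u, R u
  set IK := ∫⁻ u, K u
  set SG := ∫⁻ η, ⨆ z, G (z, η) with hSG
  set TF : Ed d → ℝ≥0∞ := fun x => ∫⁻ ξ, Ft (x, ξ) with hTF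
  have hTFm : Measurable TF := hFt.lintegral_prod_right'
  -- step A : do the Ξ integral
  have stepA : ∀ X : Ed d,
      ∫⁻ Ξ, ∫⁻ x, ∫⁻ y, ∫⁻ z, ∫⁻ ξ, ∫⁻ η,
        (K (ξ + η - Ξ) * G (z, η)) * (P (y - X) * (Q (y - x) * (R (y - z) * Ft (x, ξ))))
      = ∫⁻ x, ∫⁻ y, ∫⁻ z, ∫⁻ ξ,
          ((IK * ∫⁻ η, G (z, η)) * (P (y - X) * (Q (y - x) * (R (y - z) * Ft (x, ξ))))) := by
    intro X
    have hbig : Measurable fun q : ((((Ed d × Ed d) × Ed d) × Ed d) × Ed d) × Ed d =>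
        (K (q.1.2 + q.2 - q.1.1.1.1.1) * G (q.1.1.2, q.2)) *
          (P (q.1.1.1.2 - X) * (Q (q.1.1.1.2 - q.1.1.1.1.2) *
            (R (q.1.1.1.2 - q.1.1.2) * Ft (q.1.1.1.1.2, q.1.2)))) := by
      refine ((hK.comp ?_).mul (hG.comp ?_)).mul
        ((hP.comp ?_).mul ((hQ.comp ?_).mul ((hR.comp ?_).mul (hFt.comp ?_))))
      · exact (measurable_fst.snd.add measurable_snd).sub
          measurable_fst.fst.fst.fst.fst
      · exact measurable_fst.fst.snd.prodMk measurable_snd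
      · exact measurable_fst.fst.fst.snd.sub measurable_const
      · exact measurable_fst.fst.fst.snd.sub measurable_fst.fst.fst.fst.snd
      · exact measurable_fst.fst.fst.snd.sub measurable_fst.fst.snd
      · exact measurable_fst.fst.fst.fst.snd.prodMk measurable_fst.snd
    rw [swap5 hbig]
    refine lintegral_congr fun x => lintegral_congr fun y => lintegral_congr fun z =>
      lintegral_congr fun ξ => ?_
    exact L_eta K hK G hG z ξ _
  calc ∫⁻ X, ∫⁻ Ξ, ∫⁻ x, ∫⁻ y, ∫⁻ z, ∫⁻ ξ, ∫⁻ η,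
        (K (ξ + η - Ξ) * G (z, η)) * (P (y - X) * (Q (y - x) * (R (y - z) * Ft (x, ξ))))
      = ∫⁻ X, ∫⁻ x, ∫⁻ y, ∫⁻ z, ∫⁻ ξ,
          ((IK * ∫⁻ η, G (z, η)) * (P (y - X) * (Q (y - x) * (R (y - z) * Ft (x, ξ))))) :=
        lintegral_congr fun X => stepA X
    _ ≤ ∫⁻ X, ∫⁻ x, ∫⁻ y, ∫⁻ z, ∫⁻ ξ,
          ((((IK * SG) * P (y - X)) * Q (y - x)) * R (y - z)) * Ft (x, ξ) := by
        refine lintegral_mono fun X => lintegral_mono fun x => lintegral_mono fun y =>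
          lintegral_mono fun z => lintegral_mono fun ξ => ?_
        have hz : ∫⁻ η, G (z, η) ≤ SG :=
          lintegral_mono fun η => le_iSup (fun z' => G (z', η)) z
        calc (IK * ∫⁻ η, G (z, η)) * (P (y - X) * (Q (y - x) * (R (y - z) * Ft (x, ξ))))
            ≤ (IK * SG) * (P (y - X) * (Q (y - x) * (R (y - z) * Ft (x, ξ)))) :=
              mul_le_mul' (mul_le_mul_right hz IK) le_rfl
          _ = ((((IK * SG) * P (y - X)) * Q (y - x)) * R (y - z)) * Ft (x, ξ) := by ring
    _ = ((IP * IQ * IR * IK) * (SG * ∫⁻ x, ∫⁻ ξ, Ft (x, ξ))) := by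
        have hEξ : ∀ (A : ℝ≥0∞) (x : Ed d), ∫⁻ ξ, A * Ft (x, ξ) = A * TF x := by
          intro A x
          exact lintegral_const_mul A (hFt.comp (measurable_const.prodMk measurable_id))
        have hEz : ∀ (A B : ℝ≥0∞) (y : Ed d),
            ∫⁻ z, (A * R (y - z)) * B = (A * IR) * B := by
          intro A B y
          have : ∀ z : Ed d, (A * R (y - z)) * B = R (y - z) * (A * B) := fun z => by ring
          simp_rw [this]
          have hm : Measurable fun z : Ed d => R (y - z) :=
            hR.comp (measurable_const.sub measurable_id)
          rw [lintegral_mul_const _ hm, lint_sub_left R hR y]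
          ring
        have hEy : ∀ (A B C : ℝ≥0∞) (X x : Ed d),
            ∫⁻ y, (((A * P (y - X)) * Q (y - x)) * B) * C
              = ((A * ∫⁻ y, P (y - X) * Q (y - x)) * B) * C := by
          intro A B C X x
          have : ∀ y : Ed d, (((A * P (y - X)) * Q (y - x)) * B) * C
              = (P (y - X) * Q (y - x)) * ((A * B) * C) := fun y => by ring
          simp_rw [this]
          have hm : Measurable fun y : Ed d => P (y - X) * Q (y - x) :=
            (hP.comp (measurable_id.sub measurable_const)).mul
              (hQ.comp (measurable_id.sub measurable_const))
          rw [lintegral_mul_const _ hm]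
          ring
        simp_rw [hEξ, hEz, hEy]
        -- now : ∫⁻ X, ∫⁻ x, (((IK * SG) * ∫⁻ y, P (y-X) * Q (y-x)) * IR) * TF x = ...
        have hMm : Measurable fun q : Ed d × Ed d => ∫⁻ y, P (y - q.1) * Q (y - q.2) := by
          have : Measurable fun q : (Ed d × Ed d) × Ed d =>
              P (q.2 - q.1.1) * Q (q.2 - q.1.2) :=
            (hP.comp (measurable_snd.sub measurable_fst.fst)).mul
              (hQ.comp (measurable_snd.sub measurable_fst.snd))
          exact this.lintegral_prod_right'
        have hMX : ∀ x : Ed d, ∫⁻ X, ∫⁻ y, P (y - X) * Q (y - x) = IP * IQ := by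
          intro x
          have hsw : Measurable fun q : Ed d × Ed d => P (q.2 - q.1) * Q (q.2 - x) :=
            (hP.comp (measurable_snd.sub measurable_fst)).mul
              (hQ.comp (measurable_snd.sub measurable_const))
          rw [swap2 hsw]
          calc ∫⁻ y, ∫⁻ X, P (y - X) * Q (y - x)
              = ∫⁻ y, IP * Q (y - x) := by
                refine lintegral_congr fun y => ?_
                have hm : Measurable fun X : Ed d => P (y - X) :=
                  hP.comp (measurable_const.sub measurable_id)
                rw [lintegral_mul_const _ hm, lint_sub_left P hP y]
            _ = IP * ∫⁻ y, Q (y - x) :=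
                lintegral_const_mul _ (hQ.comp (measurable_id.sub measurable_const))
            _ = IP * IQ := by rw [lintegral_sub_right_eq_self Q x]
        calc ∫⁻ X, ∫⁻ x, (((IK * SG) * ∫⁻ y, P (y - X) * Q (y - x)) * IR) * TF x
            = ∫⁻ x, ∫⁻ X, (((IK * SG) * ∫⁻ y, P (y - X) * Q (y - x)) * IR) * TF x := by
              refine swap2 ?_
              exact ((((measurable_const.mul hMm).mul measurable_const)).mul
                (hTFm.comp measurable_snd))
          _ = ∫⁻ x, (((IK * SG) * (IP * IQ)) * IR) * TF x := by
              refine lintegral_congr fun x => ?_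
              have : ∀ X : Ed d, (((IK * SG) * ∫⁻ y, P (y - X) * Q (y - x)) * IR) * TF x
                  = (∫⁻ y, P (y - X) * Q (y - x)) * (((IK * SG) * IR) * TF x) :=
                fun X => by ring
              simp_rw [this]
              have hm : Measurable fun X : Ed d => ∫⁻ y, P (y - X) * Q (y - x) :=
                hMm.comp (measurable_id.prodMk measurable_const)
              rw [lintegral_mul_const _ hm, hMX x]
              ring
          _ = (((IK * SG) * (IP * IQ)) * IR) * ∫⁻ x, TF x :=
              lintegral_const_mul _ hTFm
          _ = (IP * IQ * IR * IK) * (SG * ∫⁻ x, ∫⁻ ξ, Ft (x, ξ)) := by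
              rw [hTF]; ring

/-- weighted convolution-type bound for a triple-window kernel:
for `φ, g, ψ ∈ 𝒮(ℝ^d)`, `r ∈ ℝ`, `2N > d`, there is `C > 0` with
`∬ ⟨X⟩^r ∫ ⟨ξ+η−Ξ⟩^{−2N} |φ(y−X)||g(y−x)||ψ(y−z)| G(z,η) F(x,ξ) ≤
  C (∫ sup_z G(z,η) dη)(∬ ⟨x⟩^r F(x,ξ) dx dξ)` for all nonnegative measurable `F, G`. -/
theorem triple_window_kernel_bound {d : ℕ}
    (φ g ψ : SchwartzMap (EuclideanSpace ℝ (Fin d)) ℂ) (r : ℝ) (N : ℕ)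
    (hN : d < 2 * N) :
    ∃ C : ℝ≥0, 0 < C ∧
      ∀ F G : EuclideanSpace ℝ (Fin d) × EuclideanSpace ℝ (Fin d) → ℝ≥0∞,
        Measurable F → Measurable G →
        (∫⁻ X : EuclideanSpace ℝ (Fin d), ∫⁻ Ξ : EuclideanSpace ℝ (Fin d),
          ENNReal.ofReal (jap X ^ r) *
            ∫⁻ x : EuclideanSpace ℝ (Fin d), ∫⁻ y : EuclideanSpace ℝ (Fin d),
              ∫⁻ z : EuclideanSpace ℝ (Fin d), ∫⁻ ξ : EuclideanSpace ℝ (Fin d),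
                ∫⁻ η : EuclideanSpace ℝ (Fin d),
                  ENNReal.ofReal (jap (ξ + η - Ξ) ^ (-(2 * N : ℝ))) *
                    (‖φ (y - X)‖₊ : ℝ≥0∞) * (‖g (y - x)‖₊ : ℝ≥0∞) *
                    (‖ψ (y - z)‖₊ : ℝ≥0∞) * G (z, η) * F (x, ξ)) ≤
        C * (∫⁻ η : EuclideanSpace ℝ (Fin d), ⨆ z : EuclideanSpace ℝ (Fin d), G (z, η)) *
          ∫⁻ x : EuclideanSpace ℝ (Fin d), ∫⁻ ξ : EuclideanSpace ℝ (Fin d),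
            ENNReal.ofReal (jap x ^ r) * F (x, ξ) := by
  have hφm : Measurable fun u : EuclideanSpace ℝ (Fin d) => (‖φ u‖₊ : ℝ≥0∞) :=
    φ.continuous.measurable.nnnorm.coe_nnreal_ennreal
  have hgm : Measurable fun u : EuclideanSpace ℝ (Fin d) => (‖g u‖₊ : ℝ≥0∞) :=
    g.continuous.measurable.nnnorm.coe_nnreal_ennreal
  have hψm : Measurable fun u : EuclideanSpace ℝ (Fin d) => (‖ψ u‖₊ : ℝ≥0∞) :=
    ψ.continuous.measurable.nnnorm.coe_nnreal_ennreal
  have hP : Measurable fun u : EuclideanSpace ℝ (Fin d) =>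
      ENNReal.ofReal (jap u ^ |r|) * (‖φ u‖₊ : ℝ≥0∞) := (measurable_jap_rpow |r|).mul hφm
  have hQ : Measurable fun u : EuclideanSpace ℝ (Fin d) =>
      ENNReal.ofReal (jap u ^ |r|) * (‖g u‖₊ : ℝ≥0∞) := (measurable_jap_rpow |r|).mul hgm
  have hK : Measurable fun u : EuclideanSpace ℝ (Fin d) =>
      ENNReal.ofReal (jap u ^ (-(2 * N : ℝ))) := measurable_jap_rpow _
  have hIP : (∫⁻ u, ENNReal.ofReal (jap u ^ |r|) * (‖φ u‖₊ : ℝ≥0∞)) ≠ ⊤ :=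
    lint_schwartz φ |r| (abs_nonneg r)
  have hIQ : (∫⁻ u, ENNReal.ofReal (jap u ^ |r|) * (‖g u‖₊ : ℝ≥0∞)) ≠ ⊤ :=
    lint_schwartz g |r| (abs_nonneg r)
  have hIR : (∫⁻ u, (‖ψ u‖₊ : ℝ≥0∞)) ≠ ⊤ := by
    have h := lint_schwartz ψ 0 le_rfl
    simpa [Real.rpow_zero, ENNReal.ofReal_one, one_mul] using h
  have hIK : (∫⁻ u : EuclideanSpace ℝ (Fin d),
      ENNReal.ofReal (jap u ^ (-(2 * N : ℝ)))) ≠ ⊤ := lint_K_ne_top N hN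
  have hCfin : ENNReal.ofReal ((2:ℝ) ^ |r|) *
      ((∫⁻ u, ENNReal.ofReal (jap u ^ |r|) * (‖φ u‖₊ : ℝ≥0∞)) *
       (∫⁻ u, ENNReal.ofReal (jap u ^ |r|) * (‖g u‖₊ : ℝ≥0∞)) *
       (∫⁻ u, (‖ψ u‖₊ : ℝ≥0∞)) *
       (∫⁻ u : EuclideanSpace ℝ (Fin d), ENNReal.ofReal (jap u ^ (-(2 * N : ℝ))))) ≠ ⊤ :=
    ENNReal.mul_ne_top ENNReal.ofReal_ne_top
      (ENNReal.mul_ne_top (ENNReal.mul_ne_top (ENNReal.mul_ne_top hIP hIQ) hIR) hIK)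
  refine ⟨1 + (ENNReal.ofReal ((2:ℝ) ^ |r|) *
      ((∫⁻ u, ENNReal.ofReal (jap u ^ |r|) * (‖φ u‖₊ : ℝ≥0∞)) *
       (∫⁻ u, ENNReal.ofReal (jap u ^ |r|) * (‖g u‖₊ : ℝ≥0∞)) *
       (∫⁻ u, (‖ψ u‖₊ : ℝ≥0∞)) *
       (∫⁻ u : EuclideanSpace ℝ (Fin d),
         ENNReal.ofReal (jap u ^ (-(2 * N : ℝ)))))).toNNReal,
    lt_of_lt_of_le zero_lt_one le_self_add, ?_⟩
  intro F G hF hG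
  have hFt : Measurable fun p : EuclideanSpace ℝ (Fin d) × EuclideanSpace ℝ (Fin d) =>
      ENNReal.ofReal (jap p.1 ^ r) * F p := ((measurable_jap_rpow r).comp measurable_fst).mul hF
  have hw : ∀ X y x : EuclideanSpace ℝ (Fin d),
      ENNReal.ofReal (jap X ^ r) ≤ ENNReal.ofReal ((2:ℝ) ^ |r|) *
        (ENNReal.ofReal (jap (y - X) ^ |r|) *
          (ENNReal.ofReal (jap (y - x) ^ |r|) * ENNReal.ofReal (jap x ^ r))) := by
    intro X y x
    calc ENNReal.ofReal (jap X ^ r)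
        ≤ ENNReal.ofReal ((2:ℝ) ^ |r| *
            (jap (y - X) ^ |r| * (jap (y - x) ^ |r| * jap x ^ r))) :=
          ENNReal.ofReal_le_ofReal (jap_weight r X y x)
      _ = ENNReal.ofReal ((2:ℝ) ^ |r|) * (ENNReal.ofReal (jap (y - X) ^ |r|) *
            (ENNReal.ofReal (jap (y - x) ^ |r|) * ENNReal.ofReal (jap x ^ r))) := by
          rw [ENNReal.ofReal_mul (by positivity),
            ENNReal.ofReal_mul (Real.rpow_nonneg (jap_nonneg _) _),
            ENNReal.ofReal_mul (Real.rpow_nonneg (jap_nonneg _) _)]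
  have pt : ∀ X Ξ x y z ξ η : EuclideanSpace ℝ (Fin d),
      ENNReal.ofReal (jap X ^ r) *
        (ENNReal.ofReal (jap (ξ + η - Ξ) ^ (-(2 * N : ℝ))) *
          (‖φ (y - X)‖₊ : ℝ≥0∞) * (‖g (y - x)‖₊ : ℝ≥0∞) *
          (‖ψ (y - z)‖₊ : ℝ≥0∞) * G (z, η) * F (x, ξ))
      ≤ ENNReal.ofReal ((2:ℝ) ^ |r|) *
          ((ENNReal.ofReal (jap (ξ + η - Ξ) ^ (-(2 * N : ℝ))) * G (z, η)) *
            ((ENNReal.ofReal (jap (y - X) ^ |r|) * (‖φ (y - X)‖₊ : ℝ≥0∞)) *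
              ((ENNReal.ofReal (jap (y - x) ^ |r|) * (‖g (y - x)‖₊ : ℝ≥0∞)) *
                ((‖ψ (y - z)‖₊ : ℝ≥0∞) *
                  (ENNReal.ofReal (jap x ^ r) * F (x, ξ)))))) := by
    intro X Ξ x y z ξ η
    refine le_trans (mul_le_mul_left (hw X y x) _) (le_of_eq ?_)
    ring
  calc (∫⁻ X : EuclideanSpace ℝ (Fin d), ∫⁻ Ξ : EuclideanSpace ℝ (Fin d),
          ENNReal.ofReal (jap X ^ r) *
            ∫⁻ x : EuclideanSpace ℝ (Fin d), ∫⁻ y : EuclideanSpace ℝ (Fin d),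
              ∫⁻ z : EuclideanSpace ℝ (Fin d), ∫⁻ ξ : EuclideanSpace ℝ (Fin d),
                ∫⁻ η : EuclideanSpace ℝ (Fin d),
                  ENNReal.ofReal (jap (ξ + η - Ξ) ^ (-(2 * N : ℝ))) *
                    (‖φ (y - X)‖₊ : ℝ≥0∞) * (‖g (y - x)‖₊ : ℝ≥0∞) *
                    (‖ψ (y - z)‖₊ : ℝ≥0∞) * G (z, η) * F (x, ξ))
      = ∫⁻ X, ∫⁻ Ξ, ∫⁻ x, ∫⁻ y, ∫⁻ z, ∫⁻ ξ, ∫⁻ η,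
          ENNReal.ofReal (jap X ^ r) *
            (ENNReal.ofReal (jap (ξ + η - Ξ) ^ (-(2 * N : ℝ))) *
              (‖φ (y - X)‖₊ : ℝ≥0∞) * (‖g (y - x)‖₊ : ℝ≥0∞) *
              (‖ψ (y - z)‖₊ : ℝ≥0∞) * G (z, η) * F (x, ξ)) := by
        refine lintegral_congr fun X => lintegral_congr fun Ξ => ?_
        simp only [push_const (ENNReal.ofReal (jap X ^ r)) ENNReal.ofReal_ne_top]
    _ ≤ ∫⁻ X, ∫⁻ Ξ, ∫⁻ x, ∫⁻ y, ∫⁻ z, ∫⁻ ξ, ∫⁻ η,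
          ENNReal.ofReal ((2:ℝ) ^ |r|) *
            ((ENNReal.ofReal (jap (ξ + η - Ξ) ^ (-(2 * N : ℝ))) * G (z, η)) *
              ((ENNReal.ofReal (jap (y - X) ^ |r|) * (‖φ (y - X)‖₊ : ℝ≥0∞)) *
                ((ENNReal.ofReal (jap (y - x) ^ |r|) * (‖g (y - x)‖₊ : ℝ≥0∞)) *
                  ((‖ψ (y - z)‖₊ : ℝ≥0∞) *
                    (ENNReal.ofReal (jap x ^ r) * F (x, ξ)))))) :=
        lintegral_mono fun X => lintegral_mono fun Ξ => lintegral_mono fun x =>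
          lintegral_mono fun y => lintegral_mono fun z => lintegral_mono fun ξ =>
            lintegral_mono fun η => pt X Ξ x y z ξ η
    _ = ENNReal.ofReal ((2:ℝ) ^ |r|) * ∫⁻ X, ∫⁻ Ξ, ∫⁻ x, ∫⁻ y, ∫⁻ z, ∫⁻ ξ, ∫⁻ η,
          (ENNReal.ofReal (jap (ξ + η - Ξ) ^ (-(2 * N : ℝ))) * G (z, η)) *
            ((ENNReal.ofReal (jap (y - X) ^ |r|) * (‖φ (y - X)‖₊ : ℝ≥0∞)) *
              ((ENNReal.ofReal (jap (y - x) ^ |r|) * (‖g (y - x)‖₊ : ℝ≥0∞)) *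
                ((‖ψ (y - z)‖₊ : ℝ≥0∞) *
                  (ENNReal.ofReal (jap x ^ r) * F (x, ξ))))) := by
        simp only [← push_const (ENNReal.ofReal ((2:ℝ) ^ |r|)) ENNReal.ofReal_ne_top]
    _ ≤ ENNReal.ofReal ((2:ℝ) ^ |r|) *
          (((∫⁻ u, ENNReal.ofReal (jap u ^ |r|) * (‖φ u‖₊ : ℝ≥0∞)) *
            (∫⁻ u, ENNReal.ofReal (jap u ^ |r|) * (‖g u‖₊ : ℝ≥0∞)) *
            (∫⁻ u, (‖ψ u‖₊ : ℝ≥0∞)) *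
            (∫⁻ u : EuclideanSpace ℝ (Fin d),
              ENNReal.ofReal (jap u ^ (-(2 * N : ℝ))))) *
          ((∫⁻ η, ⨆ z, G (z, η)) *
            (∫⁻ x, ∫⁻ ξ, ENNReal.ofReal (jap x ^ r) * F (x, ξ)))) :=
        mul_le_mul_right
          (core (fun u => ENNReal.ofReal (jap u ^ |r|) * (‖φ u‖₊ : ℝ≥0∞))
            (fun u => ENNReal.ofReal (jap u ^ |r|) * (‖g u‖₊ : ℝ≥0∞))
            (fun u => (‖ψ u‖₊ : ℝ≥0∞))
            (fun u => ENNReal.ofReal (jap u ^ (-(2 * N : ℝ))))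
            hP hQ hψm hK
            (fun p => ENNReal.ofReal (jap p.1 ^ r) * F p) G hFt hG) _
    _ ≤ ↑(1 + (ENNReal.ofReal ((2:ℝ) ^ |r|) *
          ((∫⁻ u, ENNReal.ofReal (jap u ^ |r|) * (‖φ u‖₊ : ℝ≥0∞)) *
           (∫⁻ u, ENNReal.ofReal (jap u ^ |r|) * (‖g u‖₊ : ℝ≥0∞)) *
           (∫⁻ u, (‖ψ u‖₊ : ℝ≥0∞)) *
           (∫⁻ u : EuclideanSpace ℝ (Fin d),
             ENNReal.ofReal (jap u ^ (-(2 * N : ℝ)))))).toNNReal) *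
        (∫⁻ η, ⨆ z, G (z, η)) *
        (∫⁻ x, ∫⁻ ξ, ENNReal.ofReal (jap x ^ r) * F (x, ξ)) := by
      rw [ENNReal.coe_add, ENNReal.coe_one, ENNReal.coe_toNNReal hCfin]
      refine le_trans (le_of_eq ?_) (mul_le_mul_left (mul_le_mul_left le_add_self _) _)
      ring
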